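/- For every odd natural number n ≥ 1, there exists a 2-coloring of the edges of K_{2n-1} with no monochromatic copy of the star S_n; hence r(S_n) ≥ 2n for odd n. (The coloring: on vertices {0,...,2n-2}, color edge {i, i+j mod (2n-1)} blue for j ∈ {1,...,(n-1)/2} and red otherwise, giving every vertex blue degree and red degree exactly n-1.) -/

import Mathlib

open SimpleGraph

/-- The graph of edges of color `b` in the 2-coloring `c` of a complete graph. -/
def colorGraph {V : Type*} (c : Sym2 V → Bool) (b : Bool) : SimpleGraph V :=
  SimpleGraph.fromRel (fun u v => c s(u, v) = b)

/-- `G` occurs as a (not nec. induced) subgraph of `H`. -/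
def ContainsCopy {V W : Type*} (G : SimpleGraph V) (H : SimpleGraph W) : Prop :=
  ∃ f : V → W, Function.Injective f ∧ ∀ ⦃u v : V⦄, G.Adj u v → H.Adj (f u) (f v)

/-- The coloring `c` contains a monochromatic copy of `G`. -/
def HasMonoCopy {V W : Type*} (G : SimpleGraph V) (c : Sym2 W → Bool) : Prop :=
  ∃ b : Bool, ContainsCopy G (colorGraph c b)

/-- The (diagonal) Ramsey number of a graph `G`. -/
noncomputable def ramseyNumber {V : Type*} (G : SimpleGraph V) : ℕ :=
  sInf {r : ℕ | ∀ c : Sym2 (Fin r) → Bool, HasMonoCopy G c}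

/-- The star `S n = K_{1,n}`: center `0`, `n` leaves. -/
def starGraph (n : ℕ) : SimpleGraph (Fin (n + 1)) :=
  SimpleGraph.fromRel (fun u v => u = 0)

/-- The bistar `B(m,n)`: adjacent centers `inl 0`, `inl 1`, with `m` resp. `n` leaves. -/
def bistar (m n : ℕ) : SimpleGraph (Fin 2 ⊕ Fin m ⊕ Fin n) :=
  SimpleGraph.fromRel (fun u v =>
    (u = Sum.inl 0 ∧ v = Sum.inl 1) ∨
    (u = Sum.inl 0 ∧ ∃ i, v = Sum.inr (Sum.inl i)) ∨
    (u = Sum.inl 1 ∧ ∃ j, v = Sum.inr (Sum.inr j)))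

lemma containsCopy_star_of_finset {n r : ℕ} (c : Sym2 (Fin r) → Bool) (b : Bool)
    (v : Fin r) (s : Finset (Fin r)) (hv : v ∉ s) (hcard : n ≤ s.card)
    (hcol : ∀ w ∈ s, c s(v, w) = b) :
    ContainsCopy (_root_.starGraph n) (colorGraph c b) := by
  obtain ⟨t, hts, htcard⟩ := Finset.exists_subset_card_eq hcard
  let g : Fin n → Fin r := fun i => t.orderIsoOfFin htcard ⟨i, by omega⟩
  have hgmem : ∀ i, g i ∈ s := fun i => hts (t.orderIsoOfFin htcard ⟨i, by omega⟩).2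
  have hgv : ∀ i, g i ≠ v := fun i h => hv (h ▸ hgmem i)
  have hginj : Function.Injective g := by
    intro i j h
    have := (t.orderIsoOfFin htcard).injective (Subtype.ext h)
    simpa [Fin.ext_iff] using congrArg Fin.val this
  refine ⟨Fin.cases v g, ?_, ?_⟩
  · intro i j h
    induction i using Fin.cases <;> induction j using Fin.cases <;>
      simp only [Fin.cases_zero, Fin.cases_succ] at h
    · rfl
    · exact absurd h.symm (hgv _)
    · exact absurd h (hgv _)
    · exact congrArg Fin.succ (hginj h)
  · intro u w huw
    rw [_root_.starGraph, fromRel_adj] at huw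
    obtain ⟨hne, h0⟩ := huw
    rcases h0 with rfl | rfl
    · obtain ⟨i, rfl⟩ := Fin.exists_succ_eq.mpr (Ne.symm hne)
      simp only [Fin.cases_zero, Fin.cases_succ]
      rw [colorGraph, fromRel_adj]
      exact ⟨Ne.symm (hgv i), Or.inl (hcol _ (hgmem i))⟩
    · obtain ⟨i, rfl⟩ := Fin.exists_succ_eq.mpr hne
      simp only [Fin.cases_zero, Fin.cases_succ]
      rw [colorGraph, fromRel_adj]
      exact ⟨hgv i, Or.inr (hcol _ (hgmem i))⟩

lemma no_mono_coloring (k : ℕ) :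
    ∃ c : Sym2 (Fin (4 * k + 1)) → Bool, ¬ HasMonoCopy (_root_.starGraph (2 * k + 1)) c := by
  set M := 4 * k + 1 with hM
  haveI : NeZero M := ⟨by omega⟩
  classical
  set D : Finset (ZMod M) := (Finset.Icc 1 k).image (fun j : ℕ => (j : ZMod M)) with hD
  set c : Sym2 (Fin M) → Bool := Sym2.lift ⟨fun u v =>
      (decide (((u : ℕ) : ZMod M) - ((v : ℕ) : ZMod M) ∈ D)) ||
      (decide (((v : ℕ) : ZMod M) - ((u : ℕ) : ZMod M) ∈ D)),
      fun u v => Bool.or_comm _ _⟩ with hc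
  have hcastlt : ∀ j : ℕ, j ≤ 2 * k → ((j : ZMod M) = 0 → j = 0) := by
    intro j hj h
    have := (ZMod.natCast_eq_zero_iff j M).mp h
    rcases Nat.eq_zero_or_pos j with h0 | h0
    · exact h0
    · exact absurd (Nat.le_of_dvd h0 this) (by omega)
  have hinjIcc : Set.InjOn (fun j : ℕ => (j : ZMod M)) (Finset.Icc 1 k) := by
    intro a ha b hb h
    simp only [Finset.coe_Icc, Set.mem_Icc] at ha hb
    have : (a : ZMod M).val = (b : ZMod M).val := congrArg ZMod.val h
    rwa [ZMod.val_cast_of_lt (by omega), ZMod.val_cast_of_lt (by omega)] at this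
  have hDcard : D.card = k := by
    rw [hD, Finset.card_image_of_injOn hinjIcc, Nat.card_Icc]
    omega
  set Dn : Finset (ZMod M) := D.image Neg.neg with hDn
  have hDncard : Dn.card = k := by
    rw [hDn, Finset.card_image_of_injective _ neg_injective, hDcard]
  have h0D : (0 : ZMod M) ∉ D := by
    rw [hD]
    simp only [Finset.mem_image, Finset.mem_Icc, not_exists]
    rintro j ⟨⟨hj1, hj2⟩, hj0⟩
    have := hcastlt j (by omega) hj0
    omega
  have h0Dn : (0 : ZMod M) ∉ Dn := by
    rw [hDn]
    simp only [Finset.mem_image, not_exists]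
    rintro x ⟨hx, hx0⟩
    exact h0D (by rwa [show x = 0 from by simpa using neg_eq_zero.mp hx0] at hx)
  have hdisj : Disjoint D Dn := by
    rw [Finset.disjoint_left]
    intro x hxD hxDn
    rw [hD, Finset.mem_image] at hxD
    obtain ⟨j1, hj1, rfl⟩ := hxD
    rw [hDn, Finset.mem_image] at hxDn
    obtain ⟨y, hy, hyx⟩ := hxDn
    rw [hD, Finset.mem_image] at hy
    obtain ⟨j2, hj2, rfl⟩ := hy
    simp only [Finset.mem_Icc] at hj1 hj2
    have hz : ((j1 + j2 : ℕ) : ZMod M) = 0 := by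
      push_cast
      rw [← hyx]; ring
    have := hcastlt (j1 + j2) (by omega) hz
    omega
  set Tt : Finset (ZMod M) := D ∪ Dn with hTt
  have hTtcard : Tt.card = 2 * k := by
    rw [hTt, Finset.card_union_of_disjoint hdisj, hDcard, hDncard]; ring
  set Tf : Finset (ZMod M) := Finset.univ \ insert 0 Tt with hTf
  have hTfcard : Tf.card = 2 * k := by
    rw [hTf, Finset.card_sdiff_of_subset (Finset.subset_univ _), Finset.card_insert_of_notMem
      (by rw [hTt]; simp [h0D, h0Dn]), hTtcard]
    have : Fintype.card (ZMod M) = M := ZMod.card M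
    simp [Finset.card_univ, this]
    omega
  refine ⟨c, ?_⟩
  rintro ⟨b, f, hinjf, hadj⟩
  have hcastinj : Function.Injective (fun x : Fin M => ((x : ℕ) : ZMod M)) := by
    intro x y h
    have : ((x : ℕ) : ZMod M).val = ((y : ℕ) : ZMod M).val := by
      simp only at h; rw [h]
    rw [ZMod.val_cast_of_lt x.2, ZMod.val_cast_of_lt y.2] at this
    exact Fin.ext this
  set T : Finset (ZMod M) := if b then Tt else Tf with hT
  have hTcard : T.card = 2 * k := by cases b <;> simp [hT, hTtcard, hTfcard]
  set g : Fin (2 * k + 1) → ZMod M :=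
    fun i => ((f i.succ : ℕ) : ZMod M) - ((f 0 : ℕ) : ZMod M) with hg
  have hginj : Function.Injective g := by
    intro i j h
    rw [hg] at h
    simp only at h
    have := hcastinj (sub_left_injective h)
    exact Fin.succ_injective _ (hinjf this)
  have hgT : ∀ i, g i ∈ T := by
    intro i
    have hadji := hadj (u := 0) (v := i.succ) (by
      rw [_root_.starGraph, fromRel_adj]
      exact ⟨(Fin.succ_ne_zero i).symm, Or.inl rfl⟩)
    rw [colorGraph, fromRel_adj] at hadji
    obtain ⟨hne, hcb⟩ := hadji
    have hcb' : c s(f 0, f i.succ) = b := by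
      rcases hcb with h | h
      · exact h
      · rwa [Sym2.eq_swap] at h
    rw [hc, Sym2.lift_mk] at hcb'
    cases b
    · have hTT : T = Tf := by rw [hT]; simp
      simp only [Bool.or_eq_false_iff, decide_eq_false_iff_not] at hcb'
      obtain ⟨h1, h2⟩ := hcb'
      rw [hTT, hTf, Finset.mem_sdiff, Finset.mem_insert]
      refine ⟨Finset.mem_univ _, ?_⟩
      push_neg
      refine ⟨?_, ?_⟩
      · intro h0
        rw [hg] at h0
        simp only [sub_eq_zero] at h0
        exact hne (hcastinj h0).symm
      · rw [hTt, Finset.mem_union]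
        rintro (h | h)
        · exact h2 (by rw [hg] at h; exact h)
        · rw [hDn, Finset.mem_image] at h
          obtain ⟨x, hx, hxg⟩ := h
          apply h1
          have : x = ((f 0 : ℕ) : ZMod M) - ((f i.succ : ℕ) : ZMod M) := by
            have := congrArg Neg.neg hxg
            rw [neg_neg, hg] at this
            simp only at this
            rw [this]; ring
          rwa [this] at hx
    · have hTT : T = Tt := by rw [hT]; simp
      simp only [Bool.or_eq_true, decide_eq_true_eq] at hcb'
      rw [hTT, hTt, Finset.mem_union]
      rcases hcb' with h | h
      · right
        rw [hDn, Finset.mem_image]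
        exact ⟨_, h, by rw [hg]; simp only; ring⟩
      · left
        rw [hg]; exact h
  have hle := Finset.card_le_card_of_injOn (s := (Finset.univ : Finset (Fin (2 * k + 1))))
    (t := T) g (fun i _ => hgT i) (hginj.injOn)
  rw [hTcard] at hle
  simp only [Finset.card_univ, Fintype.card_fin] at hle
  omega

lemma mem_ramsey_star (n : ℕ) :
    ∀ c : Sym2 (Fin (2 * n + 1)) → Bool, HasMonoCopy (_root_.starGraph n) c := by
  intro c
  classical
  set e : Finset (Fin (2 * n + 1)) := Finset.univ.erase 0 with he
  have hecard : e.card = 2 * n := by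
    rw [he, Finset.card_erase_of_mem (Finset.mem_univ _)]
    simp
  set st := e.filter (fun w => c s(0, w) = true) with hst
  set sf := e.filter (fun w => c s(0, w) = false) with hsf
  have hsf' : sf = e.filter (fun w => ¬ (c s(0, w) = true)) := by
    rw [hsf]
    exact Finset.filter_congr (fun x _ => by simp)
  have hcards : 2 * n ≤ st.card + sf.card := by
    have := Finset.card_filter_add_card_filter_not
      (s := e) (p := fun w => c s(0, w) = true)
    rw [← hst, ← hsf'] at this
    omega
  have : n ≤ st.card ∨ n ≤ sf.card := by omega
  rcases this with h | h
  · exact ⟨true, containsCopy_star_of_finset c true 0 st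
      (fun hmem => by simp [hst, he] at hmem) h
      (fun w hw => (Finset.mem_filter.mp hw).2)⟩
  · exact ⟨false, containsCopy_star_of_finset c false 0 sf
      (fun hmem => by simp [hsf, he] at hmem) h
      (fun w hw => (Finset.mem_filter.mp hw).2)⟩

theorem star_ramsey_lower_odd (n : ℕ) (hn : 1 ≤ n) (hodd : Odd n) :
    (∃ c : Sym2 (Fin (2 * n - 1)) → Bool, ¬ HasMonoCopy (_root_.starGraph n) c) ∧
    2 * n ≤ ramseyNumber (_root_.starGraph n) := by
  obtain ⟨k, hk⟩ := hodd
  subst hk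
  have hM : 2 * (2 * k + 1) - 1 = 4 * k + 1 := by omega
  have hcol : ∃ c : Sym2 (Fin (2 * (2 * k + 1) - 1)) → Bool,
      ¬ HasMonoCopy (_root_.starGraph (2 * k + 1)) c := by
    rw [hM]
    exact no_mono_coloring k
  refine ⟨hcol, ?_⟩
  obtain ⟨c0, hc0⟩ := hcol
  rw [ramseyNumber]
  refine le_csInf ⟨2 * (2 * k + 1) + 1, fun c => mem_ramsey_star (2 * k + 1) c⟩ ?_
  intro r hr
  by_contra hlt
  push_neg at hlt
  have hle : r ≤ 2 * (2 * k + 1) - 1 := by omega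
  set c' : Sym2 (Fin r) → Bool := fun s => c0 (s.map (Fin.castLE hle)) with hc'
  obtain ⟨b, f, hinj, hadj⟩ := hr c'
  apply hc0
  refine ⟨b, Fin.castLE hle ∘ f, (Fin.castLE_injective hle).comp hinj, ?_⟩
  intro u v huv
  have := hadj huv
  rw [colorGraph, fromRel_adj] at this ⊢
  obtain ⟨hne, hcb⟩ := this
  refine ⟨fun h => hne (Fin.castLE_injective hle h), ?_⟩
  rcases hcb with h | h
  · left
    rw [← h, hc']
    simp [Sym2.map_pair_eq, Function.comp]
  · right
    rw [← h, hc']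
    simp [Sym2.map_pair_eq, Function.comp]
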